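/- Deutsch's algorithm in λ_q computes correctly on the cnot oracle: with deutsch ≡ λU.(let (x,y) = (U ((H 0),(H 1))) in ((H x), y)) expressed in λ_q (using the Scott-encoded pair/let constructs), the state |deutsch cnot⟩ reduces under the register reduction rules of λ_q, extended linearly to superpositions, to the state |1⟩ ⊗ (1/√2)(|0⟩ − |1⟩) on the resulting pair of qubits — i.e., to the superposition (1/√2)(|(1,0)⟩ − |(1,1)⟩) of encoded pairs — where the first bit 1 = f(0) ⊕ f(1) indicates that f(x) = x is balanced. -/
import Mathlib


namespace LambdaQ

/-- Constants of the quantum lambda calculus: bits, gate symbols, placeholder. -/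
inductive Const where
  | zero | one | hadamard | phaseS | gateR | cnot | gateX | gateY | gateZ | placeholder
  deriving DecidableEq

/-- Terms of the quantum lambda calculus λ_q. -/
inductive Term where
  | var (x : ℕ)
  | lam (x : ℕ) (body : Term)
  | app (t₁ t₂ : Term)
  | const (c : Const)
  | bang (t : Term)
  | lamBang (x : ℕ) (body : Term)
  deriving DecidableEq

open Term

/-- The placeholder symbol ⊥. -/
def ph : Term := const .placeholder

def freeVars : Term → Finset ℕ
  | var x => {x}
  | lam x b => freeVars b \ {x}
  | app a b => freeVars a ∪ freeVars b
  | const _ => ∅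
  | bang t => freeVars t
  | lamBang x b => freeVars b \ {x}

def allVars : Term → Finset ℕ
  | var x => {x}
  | lam x b => insert x (allVars b)
  | app a b => allVars a ∪ allVars b
  | const _ => ∅
  | bang t => allVars t
  | lamBang x b => insert x (allVars b)

/-- Naive renaming of free occurrences of `y` by `z`. -/
def rename (y z : ℕ) : Term → Term
  | var x => if x = y then var z else var x
  | lam x b => if x = y then lam x b else lam x (rename y z b)
  | app a b => app (rename y z a) (rename y z b)
  | const c => const c
  | bang t => bang (rename y z t)
  | lamBang x b => if x = y then lamBang x b else lamBang x (rename y z b)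

def size : Term → ℕ
  | var _ => 1
  | lam _ b => size b + 1
  | app a b => size a + size b + 1
  | const _ => 1
  | bang t => size t + 1
  | lamBang _ b => size b + 1

theorem size_rename (y z : ℕ) : ∀ t, size (rename y z t) = size t := by
  intro t
  induction t with
  | var x => simp only [rename]; split <;> rfl
  | lam x b ih => simp only [rename]; split <;> simp [size, ih]
  | app a b iha ihb => simp [rename, size, iha, ihb]
  | const c => rfl
  | bang t ih => simp [rename, size, ih]
  | lamBang x b ih => simp only [rename]; split <;> simp [size, ih]

/-- A variable not occurring in the finite set `s`. -/
def fresh (s : Finset ℕ) : ℕ := (s.sup id) + 1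

/-- Capture-avoiding substitution `subst v x t = t[v/x]`. -/
def subst (v : Term) (x : ℕ) : Term → Term
  | var y => if y = x then v else var y
  | const c => const c
  | app a b => app (subst v x a) (subst v x b)
  | bang t => bang (subst v x t)
  | lam y b =>
      if y = x then lam y b
      else if y ∈ freeVars v ∧ x ∈ freeVars b then
        lam (fresh (allVars b ∪ freeVars v ∪ {x}))
          (subst v x (rename y (fresh (allVars b ∪ freeVars v ∪ {x})) b))
      else lam y (subst v x b)
  | lamBang y b =>
      if y = x then lamBang y b
      else if y ∈ freeVars v ∧ x ∈ freeVars b then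
        lamBang (fresh (allVars b ∪ freeVars v ∪ {x}))
          (subst v x (rename y (fresh (allVars b ∪ freeVars v ∪ {x})) b))
      else lamBang y (subst v x b)
  termination_by t => size t
  decreasing_by all_goals (simp [size, size_rename]; try omega)

/-- Values of λ_q: variables, constants, abstractions, !-suspensions. -/
def IsValue : Term → Prop
  | var _ => True
  | const _ => True
  | lam _ _ => True
  | lamBang _ _ => True
  | bang _ => True
  | app _ _ => False

/-- The skeleton Ē_x: replace every maximal subterm not containing x free
by the placeholder ⊥, keeping x. -/
def skel (x : ℕ) : Term → Term
  | var y => if y = x then var y else ph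
  | lam y b => if y ≠ x ∧ x ∈ freeVars b then lam y (skel x b) else ph
  | lamBang y b => if y ≠ x ∧ x ∈ freeVars b then lamBang y (skel x b) else ph
  | app a b => if x ∈ freeVars a ∪ freeVars b then app (skel x a) (skel x b) else ph
  | bang t => if x ∈ freeVars t then bang (skel x t) else ph
  | const _ => ph

/-- Scott-encoded empty list  nil ≡ λ!x.λ!y.(x id). -/
def idT : Term := lam 20 (var 20)
def nilT : Term := lamBang 0 (lamBang 1 (app (var 0) idT))
/-- cons ≡ λh.λt.λ!x.λ!y.((y h) t). -/
def consT : Term := lam 2 (lam 3 (lamBang 0 (lamBang 1 (app (app (var 1) (var 2)) (var 3)))))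
/-- The (unevaluated) pair (a, b) ≡ cons a (cons b nil). -/
def pairE (a b : Term) : Term := app (app consT a) (app (app consT b) nilT)
/-- The evaluated form of (cons a b). -/
def pairV (a b : Term) : Term := lamBang 0 (lamBang 1 (app (app (var 1) a) b))
/-- The evaluated pair value (a, b). -/
def mkPair (a b : Term) : Term := pairV a (pairV b nilT)

/-- The bit constants. -/
def bit : Bool → Term := fun b => const (if b then .one else .zero)

/-- Output of the Hadamard gate on a bit. -/
noncomputable def hadOut : Bool → (Term →₀ ℂ)
  | false => (Real.sqrt 2 : ℂ)⁻¹ • (Finsupp.single (bit false) 1 + Finsupp.single (bit true) 1)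
  | true  => (Real.sqrt 2 : ℂ)⁻¹ • (Finsupp.single (bit false) 1 - Finsupp.single (bit true) 1)

/-- Action of the primitive gate symbols on (encoded) bit values:
`GateApp g φ s` means U|φ⟩ = s for the unitary U named by g. -/
inductive GateApp : Const → Term → (Term →₀ ℂ) → Prop
  | had (b : Bool) : GateApp .hadamard (bit b) (hadOut b)
  | gX (b : Bool) : GateApp .gateX (bit b) (Finsupp.single (bit !b) 1)
  | gY (b : Bool) : GateApp .gateY (bit b)
      ((if b then -Complex.I else Complex.I) • Finsupp.single (bit !b) 1)
  | gZ (b : Bool) : GateApp .gateZ (bit b)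
      ((if b then (-1 : ℂ) else 1) • Finsupp.single (bit b) 1)
  | gS (b : Bool) : GateApp .phaseS (bit b)
      ((if b then Complex.I else 1) • Finsupp.single (bit b) 1)
  | gR (b : Bool) : GateApp .gateR (bit b)
      ((if b then Complex.exp (Complex.I * Real.pi / 4) else 1) • Finsupp.single (bit b) 1)
  | gCnot (a b : Bool) : GateApp .cnot (mkPair (bit a) (bit b))
      (Finsupp.single (mkPair (bit a) (bit (xor a b))) 1)

/-- One step of reduction of a term, producing a history entry and a
superposition of resulting terms (operational model of λ_q). -/
inductive SubStep : Term → Term → (Term →₀ ℂ) → Prop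
  | app1 {t₁ h s} (t₂) : SubStep t₁ h s →
      SubStep (app t₁ t₂) (app h ph) (s.mapDomain fun u => app u t₂)
  | app2 {v t₂ h s} : IsValue v → SubStep t₂ h s →
      SubStep (app v t₂) (app ph h) (s.mapDomain fun u => app v u)
  | beta {x E v} : IsValue v →
      SubStep (app (lam x E) v) (app (lam x (skel x E)) ph) (Finsupp.single (subst v x E) 1)
  | bangBeta1 {x E t'} : x ∈ freeVars E →
      SubStep (app (lamBang x E) (bang t')) (app (lamBang x (skel x E)) ph)
        (Finsupp.single (subst t' x E) 1)
  | bangBeta2 {x E t'} : x ∉ freeVars E →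
      SubStep (app (lamBang x E) (bang t')) (app (lamBang x ph) (bang t')) (Finsupp.single E 1)
  | gate {g φ s} : GateApp g φ s →
      SubStep (app (const g) φ) (app (const g) ph) s

/-- A configuration: history track followed by the computational register. -/
abbrev Config := List Term × Term

/-- A state: finitely supported complex linear combination of configurations. -/
abbrev QState := Config →₀ ℂ

/-- One step of the operational model on a single configuration, producing a state. -/
inductive ConfStep : Config → QState → Prop
  | sub {H t h s} : SubStep t h s →
      ConfStep (H, t) (s.mapDomain fun u => (H ++ [h], u))
  | idStep {H t} : (∀ h s, ¬ SubStep t h s) →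
      ConfStep (H, t) (Finsupp.single (H ++ [ph], t) 1)

/-- One step of the operational model of λ_q, extended linearly to states. -/
def StateStep (ψ ψ' : QState) : Prop :=
  ∃ F : Config → QState, (∀ c ∈ ψ.support, ConfStep c (F c)) ∧
    ψ' = ψ.sum fun c a => a • F c

/-- The register reduction rules of λ_q on a single term, producing a
superposition of terms. -/
inductive RegStep : Term → (Term →₀ ℂ) → Prop
  | app1 {t₁ s} (t₂) : RegStep t₁ s → RegStep (app t₁ t₂) (s.mapDomain fun u => app u t₂)
  | app2 {v t₂ s} : IsValue v → RegStep t₂ s → RegStep (app v t₂) (s.mapDomain fun u => app v u)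
  | beta {x E v} : IsValue v → RegStep (app (lam x E) v) (Finsupp.single (subst v x E) 1)
  | bangBeta {x E t'} : RegStep (app (lamBang x E) (bang t')) (Finsupp.single (subst t' x E) 1)
  | gate {g φ s} : GateApp g φ s → RegStep (app (const g) φ) s

/-- The register reduction rules extended linearly to superpositions of terms. -/
def RegStepS (c c' : Term →₀ ℂ) : Prop :=
  ∃ F : Term → (Term →₀ ℂ), (∀ t ∈ c.support, RegStep t (F t)) ∧
    c' = c.sum fun t a => a • F t

/-- Congruence of terms: they coincide symbol by symbol except possibly at
positions containing the constants 0 or 1. -/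
inductive Congr : Term → Term → Prop
  | bit {c c'} : (c = .zero ∨ c = .one) → (c' = .zero ∨ c' = .one) →
      Congr (const c) (const c')
  | var (x) : Congr (var x) (var x)
  | const (c) : Congr (const c) (const c)
  | lam {b b'} (x) : Congr b b' → Congr (lam x b) (lam x b')
  | lamBang {b b'} (x) : Congr b b' → Congr (lamBang x b) (lamBang x b')
  | app {a a' b b'} : Congr a a' → Congr b b' → Congr (app a b) (app a' b')
  | bang {t t'} : Congr t t' → Congr (bang t) (bang t')


/-- case e₁ of (nil → e₂, h:t → e₃) ≡ e₁ !(λ!z.e₂) !(λh.λt.e₃)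
(binder z = 21 chosen not free in e₂ below). -/
def caseL (e₁ e₂ : Term) (h t : ℕ) (e₃ : Term) : Term :=
  .app (.app e₁ (.bang (.lamBang 21 e₂))) (.bang (.lam h (.lam t e₃)))

/-- let (x,y) = e in e' ≡ (λ(x,y).e') e, written with nested case analysis. -/
def letPair (x y : ℕ) (e e' : Term) : Term :=
  .app (.lam 22 (caseL (.var 22) nilT x 23 (caseL (.var 23) nilT y 24 e'))) e

/-- deutsch ≡ λU. let (x,y) = U ((H 0),(H 1)) in ((H x), y). -/
def deutschT : Term :=
  .lam 25 (letPair 26 27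
    (.app (.var 25)
      (pairE (.app (.const .hadamard) (.const .zero))
             (.app (.const .hadamard) (.const .one))))
    (pairE (.app (.const .hadamard) (.var 26)) (.var 27)))

/-! ### Auxiliary machinery for the proof -/

/-- Naive (capture-ignoring) substitution; agrees with `subst` when the
substituted term is closed. -/
def nsubst (v : Term) (x : ℕ) : Term → Term
  | var y => if y = x then v else var y
  | const c => const c
  | app a b => app (nsubst v x a) (nsubst v x b)
  | bang t => bang (nsubst v x t)
  | lam y b => if y = x then lam y b else lam y (nsubst v x b)
  | lamBang y b => if y = x then lamBang y b else lamBang y (nsubst v x b)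

theorem subst_eq_nsubst (v : Term) (x : ℕ) (hv : freeVars v = ∅) :
    ∀ t, subst v x t = nsubst v x t := by
  intro t
  induction t with
  | var y => simp [subst, nsubst]
  | const c => simp [subst, nsubst]
  | app a b iha ihb => simp [subst, nsubst, iha, ihb]
  | bang t ih => simp [subst, nsubst, ih]
  | lam y b ih =>
      by_cases h : y = x
      · simp [subst, nsubst, h]
      · simp [subst, nsubst, h, hv, ih]
  | lamBang y b ih =>
      by_cases h : y = x
      · simp [subst, nsubst, h]
      · simp [subst, nsubst, h, hv, ih]

theorem regBeta {x : ℕ} {E v T : Term} (hv : IsValue v) (hcl : freeVars v = ∅)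
    (hT : nsubst v x E = T) : RegStep (app (lam x E) v) (Finsupp.single T 1) := by
  have h := RegStep.beta (x := x) (E := E) hv
  rwa [subst_eq_nsubst v x hcl, hT] at h

theorem regBangBeta {x : ℕ} {E t' T : Term} (hcl : freeVars t' = ∅)
    (hT : nsubst t' x E = T) : RegStep (app (lamBang x E) (bang t')) (Finsupp.single T 1) := by
  have h := RegStep.bangBeta (x := x) (E := E) (t' := t')
  rwa [subst_eq_nsubst t' x hcl, hT] at h

example : RegStep (Term.app deutschT (.const .cnot))
    (Finsupp.single (.app (.lam 22 (caseL (.var 22) nilT 26 23 (caseL (.var 23) nilT 27 24 (pairE (.app (.const .hadamard) (.var 26)) (.var 27)))))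
      (.app (.const .cnot) (pairE (.app (.const .hadamard) (.const .zero)) (.app (.const .hadamard) (.const .one))))) 1) :=
  regBeta trivial (by decide) (by decide)


open Finsupp in
theorem mapDomain_sub' {f : Term → Term} {v w : Term →₀ ℂ} :
    Finsupp.mapDomain f (v - w) = Finsupp.mapDomain f v - Finsupp.mapDomain f w :=
  map_sub (Finsupp.mapDomain.addMonoidHom f) v w

theorem ks_mul_ks : (Real.sqrt 2 : ℂ)⁻¹ * (Real.sqrt 2 : ℂ)⁻¹ = 2⁻¹ := by
  rw [← mul_inv, ← Complex.ofReal_mul, Real.mul_self_sqrt (by norm_num)]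
  norm_num

theorem stepS1 {t : Term} {s c' : Term →₀ ℂ} {a : ℂ} (h : RegStep t s)
    (hc : a • s = c') : RegStepS (Finsupp.single t a) c' := by
  refine ⟨fun _ => s, fun u hu => ?_, ?_⟩
  · have hu' := Finsupp.support_single_subset hu
    simp only [Finset.mem_singleton] at hu'
    subst hu'; exact h
  · rw [← hc]
    exact (Finsupp.sum_single_index (h := fun _ b => b • s) (zero_smul ℂ s)).symm

theorem stepS2 {t₁ t₂ : Term} {s₁ s₂ c' : Term →₀ ℂ} {a₁ a₂ : ℂ}
    (h21 : t₂ ≠ t₁)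
    (h₁ : RegStep t₁ s₁) (h₂ : RegStep t₂ s₂)
    (hc : a₁ • s₁ + a₂ • s₂ = c') :
    RegStepS (a₁ • Finsupp.single t₁ 1 + a₂ • Finsupp.single t₂ 1) c' := by
  have h0 : ∀ u : Term, (0:ℂ) • (if u = t₁ then s₁ else s₂) = 0 := fun u => zero_smul ℂ _
  have hadd : ∀ (u : Term) (b c : ℂ), (b + c) • (if u = t₁ then s₁ else s₂)
      = b • (if u = t₁ then s₁ else s₂) + c • (if u = t₁ then s₁ else s₂) :=
    fun u b c => add_smul b c _
  refine ⟨fun t => if t = t₁ then s₁ else s₂, fun u hu => ?_, ?_⟩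
  · have hu' : u = t₁ ∨ u = t₂ := by
      rcases Finset.mem_union.1 (Finsupp.support_add hu) with h | h
      · exact Or.inl (by simpa using Finsupp.support_single_subset (Finsupp.support_smul h))
      · exact Or.inr (by simpa using Finsupp.support_single_subset (Finsupp.support_smul h))
    rcases hu' with rfl | rfl
    · show RegStep u (if u = u then s₁ else s₂)
      rw [if_pos rfl]; exact h₁
    · show RegStep u (if u = t₁ then s₁ else s₂)
      rw [if_neg h21]; exact h₂
  · simp only [Finsupp.smul_single, smul_eq_mul, mul_one]
    rw [← hc, Finsupp.sum_add_index' h0 hadd, Finsupp.sum_single_index (h0 t₁),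
      Finsupp.sum_single_index (h0 t₂), if_pos rfl, if_neg h21]

theorem stepS4 {t₁ t₂ t₃ t₄ : Term} {s₁ s₂ s₃ s₄ c' : Term →₀ ℂ} {a₁ a₂ a₃ a₄ : ℂ}
    (h21 : t₂ ≠ t₁) (h31 : t₃ ≠ t₁) (h32 : t₃ ≠ t₂)
    (h41 : t₄ ≠ t₁) (h42 : t₄ ≠ t₂) (h43 : t₄ ≠ t₃)
    (h₁ : RegStep t₁ s₁) (h₂ : RegStep t₂ s₂) (h₃ : RegStep t₃ s₃) (h₄ : RegStep t₄ s₄)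
    (hc : a₁ • s₁ + a₂ • s₂ + a₃ • s₃ + a₄ • s₄ = c') :
    RegStepS (a₁ • Finsupp.single t₁ 1 + a₂ • Finsupp.single t₂ 1
      + a₃ • Finsupp.single t₃ 1 + a₄ • Finsupp.single t₄ 1) c' := by
  have h0 : ∀ u : Term,
      (0:ℂ) • (if u = t₁ then s₁ else if u = t₂ then s₂ else if u = t₃ then s₃ else s₄) = 0 :=
    fun u => zero_smul ℂ _
  have hadd : ∀ (u : Term) (b c : ℂ),
      (b + c) • (if u = t₁ then s₁ else if u = t₂ then s₂ else if u = t₃ then s₃ else s₄)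
      = b • (if u = t₁ then s₁ else if u = t₂ then s₂ else if u = t₃ then s₃ else s₄)
        + c • (if u = t₁ then s₁ else if u = t₂ then s₂ else if u = t₃ then s₃ else s₄) :=
    fun u b c => add_smul b c _
  refine ⟨fun t => if t = t₁ then s₁ else if t = t₂ then s₂ else if t = t₃ then s₃ else s₄,
    fun u hu => ?_, ?_⟩
  · have hu' : u = t₁ ∨ u = t₂ ∨ u = t₃ ∨ u = t₄ := by
      rcases Finset.mem_union.1 (Finsupp.support_add hu) with h | h
      · rcases Finset.mem_union.1 (Finsupp.support_add h) with h | h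
        · rcases Finset.mem_union.1 (Finsupp.support_add h) with h | h
          · exact Or.inl (by simpa using Finsupp.support_single_subset (Finsupp.support_smul h))
          · exact Or.inr (Or.inl
              (by simpa using Finsupp.support_single_subset (Finsupp.support_smul h)))
        · exact Or.inr (Or.inr (Or.inl
            (by simpa using Finsupp.support_single_subset (Finsupp.support_smul h))))
      · exact Or.inr (Or.inr (Or.inr
          (by simpa using Finsupp.support_single_subset (Finsupp.support_smul h))))
    rcases hu' with rfl | rfl | rfl | rfl
    · show RegStep u (if u = u then s₁ else if u = t₂ then s₂ else if u = t₃ then s₃ else s₄)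
      rw [if_pos rfl]; exact h₁
    · show RegStep u (if u = t₁ then s₁ else if u = u then s₂ else if u = t₃ then s₃ else s₄)
      rw [if_neg h21, if_pos rfl]; exact h₂
    · show RegStep u (if u = t₁ then s₁ else if u = t₂ then s₂ else if u = u then s₃ else s₄)
      rw [if_neg h31, if_neg h32, if_pos rfl]; exact h₃
    · show RegStep u (if u = t₁ then s₁ else if u = t₂ then s₂ else if u = t₃ then s₃ else s₄)
      rw [if_neg h41, if_neg h42, if_neg h43]; exact h₄
  · simp only [Finsupp.smul_single, smul_eq_mul, mul_one]
    rw [← hc, Finsupp.sum_add_index' h0 hadd, Finsupp.sum_add_index' h0 hadd,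
      Finsupp.sum_add_index' h0 hadd, Finsupp.sum_single_index (h0 t₁),
      Finsupp.sum_single_index (h0 t₂), Finsupp.sum_single_index (h0 t₃),
      Finsupp.sum_single_index (h0 t₄), if_pos rfl, if_neg h21, if_pos rfl,
      if_neg h31, if_neg h32, if_pos rfl, if_neg h41, if_neg h42, if_neg h43]


/-! ### Named intermediate terms of the computation -/

def Hc : Term := .const .hadamard
def Cc : Term := .const .cnot
def Kt (v : Term) : Term := .lam 3 (.lamBang 0 (.lamBang 1 (.app (.app (.var 1) v) (.var 3))))
def B1 : Term := caseL (.var 22) nilT 26 23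
  (caseL (.var 23) nilT 27 24 (pairE (.app Hc (.var 26)) (.var 27)))
def L1 : Term := .lamBang 21 nilT
def L2 : Term := .lam 26 (.lam 23 (caseL (.var 23) nilT 27 24 (pairE (.app Hc (.var 26)) (.var 27))))
def L2' (d : Term) : Term := .lam 27 (.lam 24 (pairE (.app Hc d) (.var 27)))
def ctx (p : Term) : Term := .app (.lam 22 B1) p
def ctxC (p : Term) : Term := ctx (.app Cc p)
def Xh : Term := .app (.app consT (.app Hc (bit true))) nilT
def Xc (c : Term) : Term := .app (.app consT c) nilT
def Rv (c : Term) : Term := pairV c nilT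

def T1 : Term := ctxC (.app (.app consT (.app Hc (bit false))) Xh)
def T2 (d : Bool) : Term := ctxC (.app (.app consT (bit d)) Xh)
def T3 (d : Bool) : Term := ctxC (.app (Kt (bit d)) Xh)
def T4 (d e : Bool) : Term := ctxC (.app (Kt (bit d)) (Xc (bit e)))
def T5 (d e : Bool) : Term := ctxC (.app (Kt (bit d)) (.app (Kt (bit e)) nilT))
def T6 (d e : Bool) : Term := ctxC (.app (Kt (bit d)) (Rv (bit e)))
def T7 (d e : Bool) : Term := ctxC (mkPair (bit d) (bit e))
def T8 (d c : Bool) : Term := ctx (mkPair (bit d) (bit c))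
def T9 (d c : Bool) : Term := .app (.app (mkPair (bit d) (bit c)) (.bang L1)) (.bang L2)
def T10 (d c : Bool) : Term := .app (.lamBang 1 (.app (.app (.var 1) (bit d)) (Rv (bit c)))) (.bang L2)
def T11 (d c : Bool) : Term := .app (.app L2 (bit d)) (Rv (bit c))
def T12 (d c : Bool) : Term :=
  .app (.lam 23 (caseL (.var 23) nilT 27 24 (pairE (.app Hc (bit d)) (.var 27)))) (Rv (bit c))
def T13 (d c : Bool) : Term := .app (.app (Rv (bit c)) (.bang L1)) (.bang (L2' (bit d)))
def T14 (d c : Bool) : Term := .app (.lamBang 1 (.app (.app (.var 1) (bit c)) nilT)) (.bang (L2' (bit d)))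
def T15 (d c : Bool) : Term := .app (.app (L2' (bit d)) (bit c)) nilT
def T16 (d c : Bool) : Term := .app (.lam 24 (pairE (.app Hc (bit d)) (bit c))) nilT
def T17 (d c : Bool) : Term := .app (.app consT (.app Hc (bit d))) (Xc (bit c))
def T18 (e c : Bool) : Term := .app (.app consT (bit e)) (Xc (bit c))
def T19 (c : Bool) : Term := .app (Kt (bit true)) (Xc (bit c))
def T20 (c : Bool) : Term := .app (Kt (bit true)) (.app (Kt (bit c)) nilT)
def T21 (c : Bool) : Term := .app (Kt (bit true)) (Rv (bit c))
def T22 (c : Bool) : Term := mkPair (bit true) (bit c)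


set_option maxHeartbeats 4000000 in
/-- Deutsch's algorithm computes correctly on the cnot
oracle: |deutsch cnot⟩ reduces under the register reduction rules of λ_q,
extended linearly to superpositions, to (1/√2)(|(1,0)⟩ − |(1,1)⟩), i.e. to
|1⟩ ⊗ (1/√2)(|0⟩ − |1⟩) on the resulting pair of qubits; the first bit
1 = f(0) ⊕ f(1) indicates that f(x) = x is balanced. -/

theorem deutsch_cnot :
    Relation.ReflTransGen RegStepS
      (Finsupp.single (Term.app deutschT (.const .cnot)) (1 : ℂ))
      ((Real.sqrt 2 : ℂ)⁻¹ •
        (Finsupp.single (mkPair (.const .one) (.const .zero)) 1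
          - Finsupp.single (mkPair (.const .one) (.const .one)) 1)) := by
  have H1 : RegStepS (Finsupp.single (Term.app deutschT (.const .cnot)) (1 : ℂ))
      (Finsupp.single T1 1) :=
    stepS1 (regBeta (T := T1) (by trivial) (by decide) (by decide)) (one_smul ℂ _)
  have H2 : RegStepS (Finsupp.single T1 1)
      ((Real.sqrt 2 : ℂ)⁻¹ • Finsupp.single (T2 false) 1 + (Real.sqrt 2 : ℂ)⁻¹ • Finsupp.single (T2 true) 1) :=
    stepS1 (.app2 (by trivial) (.app2 (by trivial) (.app1 Xh (.app2 (by trivial) (.gate (GateApp.had false)))))) (by simp only [hadOut, Finsupp.mapDomain_single, Finsupp.mapDomain_add, Finsupp.mapDomain_smul, mapDomain_sub', smul_smul, ks_mul_ks, smul_add, smul_sub, neg_smul, one_smul, T1, T2, T3, T4, T5, T6, T7, T8, T9, T10, T11, T12, T13, T14, T15, T16, T17, T18, T19, T20, T21, T22, ctx, ctxC, Xh, Xc, Rv, Kt, B1, L1, L2, L2', Hc, Cc, mkPair, pairV, pairE, consT, nilT, caseL, idT, show bit true = Term.const Const.one from rfl, show bit false = Term.const Const.zero from rfl, show xor false false =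 false from rfl, show xor false true = true from rfl, show xor true false = true from rfl, show xor true true = false from rfl] <;> module)
  have H3 : RegStepS ((Real.sqrt 2 : ℂ)⁻¹ • Finsupp.single (T2 false) 1 + (Real.sqrt 2 : ℂ)⁻¹ • Finsupp.single (T2 true) 1)
      ((Real.sqrt 2 : ℂ)⁻¹ • Finsupp.single (T3 false) 1 + (Real.sqrt 2 : ℂ)⁻¹ • Finsupp.single (T3 true) 1) :=
    stepS2 (by decide) (.app2 (by trivial) (.app2 (by trivial) (.app1 Xh (regBeta (T := Kt (bit false)) (by trivial) (by decide) (by decide))))) (.app2 (by trivial) (.app2 (by trivial) (.app1 Xh (regBeta (T := Kt (bit true)) (by trivial) (by decide) (by decide))))) (by simp only [hadOut, Finsupp.mapDomain_single, Finsupp.mapDomain_add, Finsupp.mapDomain_smul, mapDomain_sub', smul_smul, ks_mul_ks, smul_add, smul_sub, neg_smul, one_smul, T1, T2, T3, T4, T5, T6, T7, T8, T9, T10, T11, T12, T13, T14, T15, T16, T17, T18, T19, T20, T21, T22, ctx, ctxC, Xh, Xc, Rv, Kt, B1, L1, L2, L2', Hc, Cc, mkPair, pairV, pairE, consT, nilT,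 caseL, idT, show bit true = Term.const Const.one from rfl, show bit false = Term.const Const.zero from rfl, show xor false false = false from rfl, show xor false true = true from rfl, show xor true false = true from rfl, show xor true true = false from rfl] <;> module)
  have H4 : RegStepS ((Real.sqrt 2 : ℂ)⁻¹ • Finsupp.single (T3 false) 1 + (Real.sqrt 2 : ℂ)⁻¹ • Finsupp.single (T3 true) 1)
      ((2⁻¹ : ℂ) • Finsupp.single (T4 false false) 1 + (-2⁻¹ : ℂ) • Finsupp.single (T4 false true) 1 + (2⁻¹ : ℂ) • Finsupp.single (T4 true false) 1 + (-2⁻¹ : ℂ) • Finsupp.single (T4 true true) 1) :=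
    stepS2 (by decide) (.app2 (by trivial) (.app2 (by trivial) (.app2 (by trivial) (.app1 nilT (.app2 (by trivial) (.gate (GateApp.had true))))))) (.app2 (by trivial) (.app2 (by trivial) (.app2 (by trivial) (.app1 nilT (.app2 (by trivial) (.gate (GateApp.had true))))))) (by simp only [hadOut, Finsupp.mapDomain_single, Finsupp.mapDomain_add, Finsupp.mapDomain_smul, mapDomain_sub', smul_smul, ks_mul_ks, smul_add, smul_sub, neg_smul, one_smul, T1, T2, T3, T4, T5, T6, T7, T8, T9, T10, T11, T12, T13, T14, T15, T16, T17, T18, T19, T20, T21, T22, ctx, ctxC, Xh, Xc, Rv, Kt, B1, L1, L2, L2', Hc, Cc, mkPair, pairV, pairE, consT, nilT, caseL, idT, show bit true = Term.const Const.one from rfl, show bit false = Term.const Const.zero from rfl, show xor false false = false from rfl, show xor false true = true from rfl, show xor true false = true from rfl, show xor true true = false from rfl] <;> module)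
  have H5 : RegStepS ((2⁻¹ : ℂ) • Finsupp.single (T4 false false) 1 + (-2⁻¹ : ℂ) • Finsupp.single (T4 false true) 1 + (2⁻¹ : ℂ) • Finsupp.single (T4 true false) 1 + (-2⁻¹ : ℂ) • Finsupp.single (T4 true true) 1)
      ((2⁻¹ : ℂ) • Finsupp.single (T5 false false) 1 + (-2⁻¹ : ℂ) • Finsupp.single (T5 false true) 1 + (2⁻¹ : ℂ) • Finsupp.single (T5 true false) 1 + (-2⁻¹ : ℂ) • Finsupp.single (T5 true true) 1) :=
    stepS4 (by decide) (by decide) (by decide) (by decide) (by decide) (by decide)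
      (.app2 (by trivial) (.app2 (by trivial) (.app2 (by trivial) (.app1 nilT (regBeta (T := Kt (bit false)) (by trivial) (by decide) (by decide)))))) (.app2 (by trivial) (.app2 (by trivial) (.app2 (by trivial) (.app1 nilT (regBeta (T := Kt (bit true)) (by trivial) (by decide) (by decide)))))) (.app2 (by trivial) (.app2 (by trivial) (.app2 (by trivial) (.app1 nilT (regBeta (T := Kt (bit false)) (by trivial) (by decide) (by decide)))))) (.app2 (by trivial) (.app2 (by trivial) (.app2 (by trivial) (.app1 nilT (regBeta (T := Kt (bit true)) (by trivial) (by decide) (by decide))))))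
      (by simp only [hadOut, Finsupp.mapDomain_single, Finsupp.mapDomain_add, Finsupp.mapDomain_smul, mapDomain_sub', smul_smul, ks_mul_ks, smul_add, smul_sub, neg_smul, one_smul, T1, T2, T3, T4, T5, T6, T7, T8, T9, T10, T11, T12, T13, T14, T15, T16, T17, T18, T19, T20, T21, T22, ctx, ctxC, Xh, Xc, Rv, Kt, B1, L1, L2, L2', Hc, Cc, mkPair, pairV, pairE, consT, nilT, caseL, idT, show bit true = Term.const Const.one from rfl, show bit false = Term.const Const.zero from rfl, show xor false false = false from rfl, show xor false true = true from rfl, show xor true false = true from rfl, show xor true true = false from rfl] <;> module)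
  have H6 : RegStepS ((2⁻¹ : ℂ) • Finsupp.single (T5 false false) 1 + (-2⁻¹ : ℂ) • Finsupp.single (T5 false true) 1 + (2⁻¹ : ℂ) • Finsupp.single (T5 true false) 1 + (-2⁻¹ : ℂ) • Finsupp.single (T5 true true) 1)
      ((2⁻¹ : ℂ) • Finsupp.single (T6 false false) 1 + (-2⁻¹ : ℂ) • Finsupp.single (T6 false true) 1 + (2⁻¹ : ℂ) • Finsupp.single (T6 true false) 1 + (-2⁻¹ : ℂ) • Finsupp.single (T6 true true) 1) :=
    stepS4 (by decide) (by decide) (by decide) (by decide) (by decide) (by decide)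
      (.app2 (by trivial) (.app2 (by trivial) (.app2 (by trivial) (regBeta (T := Rv (bit false)) (by trivial) (by decide) (by decide))))) (.app2 (by trivial) (.app2 (by trivial) (.app2 (by trivial) (regBeta (T := Rv (bit true)) (by trivial) (by decide) (by decide))))) (.app2 (by trivial) (.app2 (by trivial) (.app2 (by trivial) (regBeta (T := Rv (bit false)) (by trivial) (by decide) (by decide))))) (.app2 (by trivial) (.app2 (by trivial) (.app2 (by trivial) (regBeta (T := Rv (bit true)) (by trivial) (by decide) (by decide)))))
      (by simp only [hadOut, Finsupp.mapDomain_single, Finsupp.mapDomain_add, Finsupp.mapDomain_smul, mapDomain_sub', smul_smul, ks_mul_ks, smul_add, smul_sub, neg_smul, one_smul, T1, T2, T3, T4, T5, T6, T7, T8, T9, T10, T11, T12, T13, T14, T15, T16, T17, T18, T19, T20, T21, T22, ctx, ctxC, Xh, Xc, Rv, Kt, B1, L1, L2, L2', Hc, Cc, mkPair, pairV, pairE, consT, nilT, caseL, idT, show bit true = Term.const Const.one from rfl, show bit false = Term.const Const.zero from rfl, show xor false false = false from rfl, show xor false true = true from rfl, show xor true false = true from rfl, show xor true true = false from rfl] <;>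 module)
  have H7 : RegStepS ((2⁻¹ : ℂ) • Finsupp.single (T6 false false) 1 + (-2⁻¹ : ℂ) • Finsupp.single (T6 false true) 1 + (2⁻¹ : ℂ) • Finsupp.single (T6 true false) 1 + (-2⁻¹ : ℂ) • Finsupp.single (T6 true true) 1)
      ((2⁻¹ : ℂ) • Finsupp.single (T7 false false) 1 + (-2⁻¹ : ℂ) • Finsupp.single (T7 false true) 1 + (2⁻¹ : ℂ) • Finsupp.single (T7 true false) 1 + (-2⁻¹ : ℂ) • Finsupp.single (T7 true true) 1) :=
    stepS4 (by decide) (by decide) (by decide) (by decide) (by decide) (by decide)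
      (.app2 (by trivial) (.app2 (by trivial) (regBeta (T := mkPair (bit false) (bit false)) (by trivial) (by decide) (by decide)))) (.app2 (by trivial) (.app2 (by trivial) (regBeta (T := mkPair (bit false) (bit true)) (by trivial) (by decide) (by decide)))) (.app2 (by trivial) (.app2 (by trivial) (regBeta (T := mkPair (bit true) (bit false)) (by trivial) (by decide) (by decide)))) (.app2 (by trivial) (.app2 (by trivial) (regBeta (T := mkPair (bit true) (bit true)) (by trivial) (by decide) (by decide))))
      (by simp only [hadOut, Finsupp.mapDomain_single, Finsupp.mapDomain_add, Finsupp.mapDomain_smul, mapDomain_sub', smul_smul, ks_mul_ks, smul_add, smul_sub, neg_smul, one_smul, T1, T2, T3, T4, T5, T6, T7, T8, T9, T10, T11, T12, T13, T14, T15, T16, T17, T18, T19, T20, T21, T22, ctx, ctxC, Xh, Xc, Rv, Kt, B1, L1, L2, L2', Hc, Cc, mkPair, pairV, pairE, consT, nilT, caseL, idT, show bit true = Term.const Const.one from rfl, show bit false = Term.const Const.zero from rfl, show xor false false = false from rfl, show xor false true = true from rfl, show xor true false = true from rfl, show xor true true = false from rfl] <;> module)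
  have H8 : RegStepS ((2⁻¹ : ℂ) • Finsupp.single (T7 false false) 1 + (-2⁻¹ : ℂ) • Finsupp.single (T7 false true) 1 + (2⁻¹ : ℂ) • Finsupp.single (T7 true false) 1 + (-2⁻¹ : ℂ) • Finsupp.single (T7 true true) 1)
      ((2⁻¹ : ℂ) • Finsupp.single (T8 false false) 1 + (-2⁻¹ : ℂ) • Finsupp.single (T8 false true) 1 + (2⁻¹ : ℂ) • Finsupp.single (T8 true true) 1 + (-2⁻¹ : ℂ) • Finsupp.single (T8 true false) 1) :=
    stepS4 (by decide) (by decide) (by decide) (by decide) (by decide) (by decide)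
      (.app2 (by trivial) (.gate (GateApp.gCnot false false))) (.app2 (by trivial) (.gate (GateApp.gCnot false true))) (.app2 (by trivial) (.gate (GateApp.gCnot true false))) (.app2 (by trivial) (.gate (GateApp.gCnot true true)))
      (by simp only [hadOut, Finsupp.mapDomain_single, Finsupp.mapDomain_add, Finsupp.mapDomain_smul, mapDomain_sub', smul_smul, ks_mul_ks, smul_add, smul_sub, neg_smul, one_smul, T1, T2, T3, T4, T5, T6, T7, T8, T9, T10, T11, T12, T13, T14, T15, T16, T17, T18, T19, T20, T21, T22, ctx, ctxC, Xh, Xc, Rv, Kt, B1, L1, L2, L2', Hc, Cc, mkPair, pairV, pairE, consT, nilT, caseL, idT, show bit true = Term.const Const.one from rfl, show bit false = Term.const Const.zero from rfl, show xor false false = false from rfl, show xor false true = true from rfl, show xor true false = true from rfl, show xor true true = false from rfl] <;> module)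
  have H9 : RegStepS ((2⁻¹ : ℂ) • Finsupp.single (T8 false false) 1 + (-2⁻¹ : ℂ) • Finsupp.single (T8 false true) 1 + (2⁻¹ : ℂ) • Finsupp.single (T8 true true) 1 + (-2⁻¹ : ℂ) • Finsupp.single (T8 true false) 1)
      ((2⁻¹ : ℂ) • Finsupp.single (T9 false false) 1 + (-2⁻¹ : ℂ) • Finsupp.single (T9 false true) 1 + (2⁻¹ : ℂ) • Finsupp.single (T9 true true) 1 + (-2⁻¹ : ℂ) • Finsupp.single (T9 true false) 1) :=
    stepS4 (by decide) (by decide) (by decide) (by decide) (by decide) (by decide)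
      (regBeta (T := T9 false false) (by trivial) (by decide) (by decide)) (regBeta (T := T9 false true) (by trivial) (by decide) (by decide)) (regBeta (T := T9 true true) (by trivial) (by decide) (by decide)) (regBeta (T := T9 true false) (by trivial) (by decide) (by decide))
      (by simp only [hadOut, Finsupp.mapDomain_single, Finsupp.mapDomain_add, Finsupp.mapDomain_smul, mapDomain_sub', smul_smul, ks_mul_ks, smul_add, smul_sub, neg_smul, one_smul, T1, T2, T3, T4, T5, T6, T7, T8, T9, T10, T11, T12, T13, T14, T15, T16, T17, T18, T19, T20, T21, T22, ctx, ctxC, Xh, Xc, Rv, Kt, B1, L1, L2, L2', Hc, Cc, mkPair, pairV, pairE, consT, nilT, caseL, idT, show bit true = Term.const Const.one from rfl, show bit false = Term.const Const.zero from rfl, show xor false false = false from rfl, show xor false true = true from rfl, show xor true false = true from rfl, show xor true true = false from rfl] <;> module)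
  have H10 : RegStepS ((2⁻¹ : ℂ) • Finsupp.single (T9 false false) 1 + (-2⁻¹ : ℂ) • Finsupp.single (T9 false true) 1 + (2⁻¹ : ℂ) • Finsupp.single (T9 true true) 1 + (-2⁻¹ : ℂ) • Finsupp.single (T9 true false) 1)
      ((2⁻¹ : ℂ) • Finsupp.single (T10 false false) 1 + (-2⁻¹ : ℂ) • Finsupp.single (T10 false true) 1 + (2⁻¹ : ℂ) • Finsupp.single (T10 true true) 1 + (-2⁻¹ : ℂ) • Finsupp.single (T10 true false) 1) :=
    stepS4 (by decide) (by decide) (by decide) (by decide) (by decide) (by decide)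
      (.app1 (.bang L2) (regBangBeta (T := .lamBang 1 (.app (.app (.var 1) (bit false)) (Rv (bit false)))) (by decide) (by decide))) (.app1 (.bang L2) (regBangBeta (T := .lamBang 1 (.app (.app (.var 1) (bit false)) (Rv (bit true)))) (by decide) (by decide))) (.app1 (.bang L2) (regBangBeta (T := .lamBang 1 (.app (.app (.var 1) (bit true)) (Rv (bit true)))) (by decide) (by decide))) (.app1 (.bang L2) (regBangBeta (T := .lamBang 1 (.app (.app (.var 1) (bit true)) (Rv (bit false)))) (by decide) (by decide)))
      (by simp only [hadOut, Finsupp.mapDomain_single, Finsupp.mapDomain_add, Finsupp.mapDomain_smul, mapDomain_sub', smul_smul, ks_mul_ks, smul_add, smul_sub, neg_smul, one_smul, T1, T2, T3, T4, T5, T6, T7, T8, T9, T10, T11, T12, T13, T14, T15, T16, T17, T18, T19, T20, T21, T22, ctx, ctxC, Xh, Xc, Rv, Kt, B1, L1, L2, L2', Hc, Cc, mkPair, pairV, pairE, consT, nilT, caseL, idT, show bit true = Term.const Const.one from rfl, show bit false = Term.const Const.zero from rfl, show xor false false = false from rfl, show xor false true = true from rfl, show xor true false = true from rfl, show xor true true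 = false from rfl] <;> module)
  have H11 : RegStepS ((2⁻¹ : ℂ) • Finsupp.single (T10 false false) 1 + (-2⁻¹ : ℂ) • Finsupp.single (T10 false true) 1 + (2⁻¹ : ℂ) • Finsupp.single (T10 true true) 1 + (-2⁻¹ : ℂ) • Finsupp.single (T10 true false) 1)
      ((2⁻¹ : ℂ) • Finsupp.single (T11 false false) 1 + (-2⁻¹ : ℂ) • Finsupp.single (T11 false true) 1 + (2⁻¹ : ℂ) • Finsupp.single (T11 true true) 1 + (-2⁻¹ : ℂ) • Finsupp.single (T11 true false) 1) :=
    stepS4 (by decide) (by decide) (by decide) (by decide) (by decide) (by decide)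
      (regBangBeta (T := T11 false false) (by decide) (by decide)) (regBangBeta (T := T11 false true) (by decide) (by decide)) (regBangBeta (T := T11 true true) (by decide) (by decide)) (regBangBeta (T := T11 true false) (by decide) (by decide))
      (by simp only [hadOut, Finsupp.mapDomain_single, Finsupp.mapDomain_add, Finsupp.mapDomain_smul, mapDomain_sub', smul_smul, ks_mul_ks, smul_add, smul_sub, neg_smul, one_smul, T1, T2, T3, T4, T5, T6, T7, T8, T9, T10, T11, T12, T13, T14, T15, T16, T17, T18, T19, T20, T21, T22, ctx, ctxC, Xh, Xc, Rv, Kt, B1, L1, L2, L2', Hc, Cc, mkPair, pairV, pairE, consT, nilT, caseL, idT, show bit true = Term.const Const.one from rfl, show bit false = Term.const Const.zero from rfl, show xor false false = false from rfl, show xor false true = true from rfl, show xor true false = true from rfl, show xor true true = false from rfl] <;> module)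
  have H12 : RegStepS ((2⁻¹ : ℂ) • Finsupp.single (T11 false false) 1 + (-2⁻¹ : ℂ) • Finsupp.single (T11 false true) 1 + (2⁻¹ : ℂ) • Finsupp.single (T11 true true) 1 + (-2⁻¹ : ℂ) • Finsupp.single (T11 true false) 1)
      ((2⁻¹ : ℂ) • Finsupp.single (T12 false false) 1 + (-2⁻¹ : ℂ) • Finsupp.single (T12 false true) 1 + (2⁻¹ : ℂ) • Finsupp.single (T12 true true) 1 + (-2⁻¹ : ℂ) • Finsupp.single (T12 true false) 1) :=
    stepS4 (by decide) (by decide) (by decide) (by decide) (by decide) (by decide)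
      (.app1 (Rv (bit false)) (regBeta (T := .lam 23 (caseL (.var 23) nilT 27 24 (pairE (.app Hc (bit false)) (.var 27)))) (by trivial) (by decide) (by decide))) (.app1 (Rv (bit true)) (regBeta (T := .lam 23 (caseL (.var 23) nilT 27 24 (pairE (.app Hc (bit false)) (.var 27)))) (by trivial) (by decide) (by decide))) (.app1 (Rv (bit true)) (regBeta (T := .lam 23 (caseL (.var 23) nilT 27 24 (pairE (.app Hc (bit true)) (.var 27)))) (by trivial) (by decide) (by decide))) (.app1 (Rv (bit false)) (regBeta (T := .lam 23 (caseL (.var 23) nilT 27 24 (pairE (.app Hc (bit true)) (.var 27)))) (by trivial) (by decide) (by decide)))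
      (by simp only [hadOut, Finsupp.mapDomain_single, Finsupp.mapDomain_add, Finsupp.mapDomain_smul, mapDomain_sub', smul_smul, ks_mul_ks, smul_add, smul_sub, neg_smul, one_smul, T1, T2, T3, T4, T5, T6, T7, T8, T9, T10, T11, T12, T13, T14, T15, T16, T17, T18, T19, T20, T21, T22, ctx, ctxC, Xh, Xc, Rv, Kt, B1, L1, L2, L2', Hc, Cc, mkPair, pairV, pairE, consT, nilT, caseL, idT, show bit true = Term.const Const.one from rfl, show bit false = Term.const Const.zero from rfl, show xor false false = false from rfl, show xor false true = true from rfl, show xor true false = true from rfl, show xor true true = false from rfl] <;> module)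
  have H13 : RegStepS ((2⁻¹ : ℂ) • Finsupp.single (T12 false false) 1 + (-2⁻¹ : ℂ) • Finsupp.single (T12 false true) 1 + (2⁻¹ : ℂ) • Finsupp.single (T12 true true) 1 + (-2⁻¹ : ℂ) • Finsupp.single (T12 true false) 1)
      ((2⁻¹ : ℂ) • Finsupp.single (T13 false false) 1 + (-2⁻¹ : ℂ) • Finsupp.single (T13 false true) 1 + (2⁻¹ : ℂ) • Finsupp.single (T13 true true) 1 + (-2⁻¹ : ℂ) • Finsupp.single (T13 true false) 1) :=
    stepS4 (by decide) (by decide) (by decide) (by decide) (by decide) (by decide)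
      (regBeta (T := T13 false false) (by trivial) (by decide) (by decide)) (regBeta (T := T13 false true) (by trivial) (by decide) (by decide)) (regBeta (T := T13 true true) (by trivial) (by decide) (by decide)) (regBeta (T := T13 true false) (by trivial) (by decide) (by decide))
      (by simp only [hadOut, Finsupp.mapDomain_single, Finsupp.mapDomain_add, Finsupp.mapDomain_smul, mapDomain_sub', smul_smul, ks_mul_ks, smul_add, smul_sub, neg_smul, one_smul, T1, T2, T3, T4, T5, T6, T7, T8, T9, T10, T11, T12, T13, T14, T15, T16, T17, T18, T19, T20, T21, T22, ctx, ctxC, Xh, Xc, Rv, Kt, B1, L1, L2, L2', Hc, Cc, mkPair, pairV, pairE, consT, nilT, caseL, idT, show bit true = Term.const Const.one from rfl, show bit false = Term.const Const.zero from rfl, show xor false false = false from rfl, show xor false true = true from rfl, show xor true false = true from rfl, show xor true true = false from rfl] <;> module)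
  have H14 : RegStepS ((2⁻¹ : ℂ) • Finsupp.single (T13 false false) 1 + (-2⁻¹ : ℂ) • Finsupp.single (T13 false true) 1 + (2⁻¹ : ℂ) • Finsupp.single (T13 true true) 1 + (-2⁻¹ : ℂ) • Finsupp.single (T13 true false) 1)
      ((2⁻¹ : ℂ) • Finsupp.single (T14 false false) 1 + (-2⁻¹ : ℂ) • Finsupp.single (T14 false true) 1 + (2⁻¹ : ℂ) • Finsupp.single (T14 true true) 1 + (-2⁻¹ : ℂ) • Finsupp.single (T14 true false) 1) :=
    stepS4 (by decide) (by decide) (by decide) (by decide) (by decide) (by decide)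
      (.app1 (.bang (L2' (bit false))) (regBangBeta (T := .lamBang 1 (.app (.app (.var 1) (bit false)) nilT)) (by decide) (by decide))) (.app1 (.bang (L2' (bit false))) (regBangBeta (T := .lamBang 1 (.app (.app (.var 1) (bit true)) nilT)) (by decide) (by decide))) (.app1 (.bang (L2' (bit true))) (regBangBeta (T := .lamBang 1 (.app (.app (.var 1) (bit true)) nilT)) (by decide) (by decide))) (.app1 (.bang (L2' (bit true))) (regBangBeta (T := .lamBang 1 (.app (.app (.var 1) (bit false)) nilT)) (by decide) (by decide)))
      (by simp only [hadOut, Finsupp.mapDomain_single, Finsupp.mapDomain_add, Finsupp.mapDomain_smul, mapDomain_sub', smul_smul, ks_mul_ks, smul_add, smul_sub, neg_smul, one_smul, T1, T2, T3, T4, T5, T6, T7, T8, T9, T10, T11, T12, T13, T14, T15, T16, T17, T18, T19, T20, T21, T22, ctx, ctxC, Xh, Xc, Rv, Kt, B1, L1, L2, L2', Hc, Cc, mkPair, pairV, pairE, consT, nilT, caseL, idT, show bit true = Term.const Const.one from rfl, show bit false = Term.const Const.zero from rfl, show xor false false = false from rfl, show xor false true = true from rfl, show xor true false = true from rfl, show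 xor true true = false from rfl] <;> module)
  have H15 : RegStepS ((2⁻¹ : ℂ) • Finsupp.single (T14 false false) 1 + (-2⁻¹ : ℂ) • Finsupp.single (T14 false true) 1 + (2⁻¹ : ℂ) • Finsupp.single (T14 true true) 1 + (-2⁻¹ : ℂ) • Finsupp.single (T14 true false) 1)
      ((2⁻¹ : ℂ) • Finsupp.single (T15 false false) 1 + (-2⁻¹ : ℂ) • Finsupp.single (T15 false true) 1 + (2⁻¹ : ℂ) • Finsupp.single (T15 true true) 1 + (-2⁻¹ : ℂ) • Finsupp.single (T15 true false) 1) :=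
    stepS4 (by decide) (by decide) (by decide) (by decide) (by decide) (by decide)
      (regBangBeta (T := T15 false false) (by decide) (by decide)) (regBangBeta (T := T15 false true) (by decide) (by decide)) (regBangBeta (T := T15 true true) (by decide) (by decide)) (regBangBeta (T := T15 true false) (by decide) (by decide))
      (by simp only [hadOut, Finsupp.mapDomain_single, Finsupp.mapDomain_add, Finsupp.mapDomain_smul, mapDomain_sub', smul_smul, ks_mul_ks, smul_add, smul_sub, neg_smul, one_smul, T1, T2, T3, T4, T5, T6, T7, T8, T9, T10, T11, T12, T13, T14, T15, T16, T17, T18, T19, T20, T21, T22, ctx, ctxC, Xh, Xc, Rv, Kt, B1, L1, L2, L2', Hc, Cc, mkPair, pairV, pairE, consT, nilT, caseL, idT, show bit true = Term.const Const.one from rfl, show bit false = Term.const Const.zero from rfl, show xor false false = false from rfl, show xor false true = true from rfl, show xor true false = true from rfl, show xor true true = false from rfl] <;> module)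
  have H16 : RegStepS ((2⁻¹ : ℂ) • Finsupp.single (T15 false false) 1 + (-2⁻¹ : ℂ) • Finsupp.single (T15 false true) 1 + (2⁻¹ : ℂ) • Finsupp.single (T15 true true) 1 + (-2⁻¹ : ℂ) • Finsupp.single (T15 true false) 1)
      ((2⁻¹ : ℂ) • Finsupp.single (T16 false false) 1 + (-2⁻¹ : ℂ) • Finsupp.single (T16 false true) 1 + (2⁻¹ : ℂ) • Finsupp.single (T16 true true) 1 + (-2⁻¹ : ℂ) • Finsupp.single (T16 true false) 1) :=
    stepS4 (by decide) (by decide) (by decide) (by decide) (by decide) (by decide)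
      (.app1 nilT (regBeta (T := .lam 24 (pairE (.app Hc (bit false)) (bit false))) (by trivial) (by decide) (by decide))) (.app1 nilT (regBeta (T := .lam 24 (pairE (.app Hc (bit false)) (bit true))) (by trivial) (by decide) (by decide))) (.app1 nilT (regBeta (T := .lam 24 (pairE (.app Hc (bit true)) (bit true))) (by trivial) (by decide) (by decide))) (.app1 nilT (regBeta (T := .lam 24 (pairE (.app Hc (bit true)) (bit false))) (by trivial) (by decide) (by decide)))
      (by simp only [hadOut, Finsupp.mapDomain_single, Finsupp.mapDomain_add, Finsupp.mapDomain_smul, mapDomain_sub', smul_smul, ks_mul_ks, smul_add, smul_sub, neg_smul, one_smul, T1, T2, T3, T4, T5, T6, T7, T8, T9, T10, T11, T12, T13, T14, T15, T16, T17, T18, T19, T20, T21, T22, ctx, ctxC, Xh, Xc, Rv, Kt, B1, L1, L2, L2', Hc, Cc, mkPair, pairV, pairE, consT, nilT, caseL, idT, show bit true = Term.const Const.one from rfl, show bit false = Term.const Const.zero from rfl, show xor false false = false from rfl, show xor false true = true from rfl, show xor true false = true from rfl, show xor true true = false from rfl] <;> module)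
  have H17 : RegStepS ((2⁻¹ : ℂ) • Finsupp.single (T16 false false) 1 + (-2⁻¹ : ℂ) • Finsupp.single (T16 false true) 1 + (2⁻¹ : ℂ) • Finsupp.single (T16 true true) 1 + (-2⁻¹ : ℂ) • Finsupp.single (T16 true false) 1)
      ((2⁻¹ : ℂ) • Finsupp.single (T17 false false) 1 + (-2⁻¹ : ℂ) • Finsupp.single (T17 false true) 1 + (2⁻¹ : ℂ) • Finsupp.single (T17 true true) 1 + (-2⁻¹ : ℂ) • Finsupp.single (T17 true false) 1) :=
    stepS4 (by decide) (by decide) (by decide) (by decide) (by decide) (by decide)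
      (regBeta (T := T17 false false) (by trivial) (by decide) (by decide)) (regBeta (T := T17 false true) (by trivial) (by decide) (by decide)) (regBeta (T := T17 true true) (by trivial) (by decide) (by decide)) (regBeta (T := T17 true false) (by trivial) (by decide) (by decide))
      (by simp only [hadOut, Finsupp.mapDomain_single, Finsupp.mapDomain_add, Finsupp.mapDomain_smul, mapDomain_sub', smul_smul, ks_mul_ks, smul_add, smul_sub, neg_smul, one_smul, T1, T2, T3, T4, T5, T6, T7, T8, T9, T10, T11, T12, T13, T14, T15, T16, T17, T18, T19, T20, T21, T22, ctx, ctxC, Xh, Xc, Rv, Kt, B1, L1, L2, L2', Hc, Cc, mkPair, pairV, pairE, consT, nilT, caseL, idT, show bit true = Term.const Const.one from rfl, show bit false = Term.const Const.zero from rfl, show xor false false = false from rfl, show xor false true = true from rfl, show xor true false = true from rfl, show xor true true = false from rfl] <;> module)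
  have H18 : RegStepS ((2⁻¹ : ℂ) • Finsupp.single (T17 false false) 1 + (-2⁻¹ : ℂ) • Finsupp.single (T17 false true) 1 + (2⁻¹ : ℂ) • Finsupp.single (T17 true true) 1 + (-2⁻¹ : ℂ) • Finsupp.single (T17 true false) 1)
      ((Real.sqrt 2 : ℂ)⁻¹ • Finsupp.single (T18 true false) 1 + (-(Real.sqrt 2 : ℂ)⁻¹) • Finsupp.single (T18 true true) 1) :=
    stepS4 (by decide) (by decide) (by decide) (by decide) (by decide) (by decide)
      (.app1 (Xc (bit false)) (.app2 (by trivial) (.gate (GateApp.had false)))) (.app1 (Xc (bit true)) (.app2 (by trivial) (.gate (GateApp.had false)))) (.app1 (Xc (bit true)) (.app2 (by trivial) (.gate (GateApp.had true)))) (.app1 (Xc (bit false)) (.app2 (by trivial) (.gate (GateApp.had true))))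
      (by simp only [hadOut, Finsupp.mapDomain_single, Finsupp.mapDomain_add, Finsupp.mapDomain_smul, mapDomain_sub', smul_smul, ks_mul_ks, smul_add, smul_sub, neg_smul, one_smul, T1, T2, T3, T4, T5, T6, T7, T8, T9, T10, T11, T12, T13, T14, T15, T16, T17, T18, T19, T20, T21, T22, ctx, ctxC, Xh, Xc, Rv, Kt, B1, L1, L2, L2', Hc, Cc, mkPair, pairV, pairE, consT, nilT, caseL, idT, show bit true = Term.const Const.one from rfl, show bit false = Term.const Const.zero from rfl, show xor false false = false from rfl, show xor false true = true from rfl, show xor true false = true from rfl, show xor true true = false from rfl] <;> module)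
  have H19 : RegStepS ((Real.sqrt 2 : ℂ)⁻¹ • Finsupp.single (T18 true false) 1 + (-(Real.sqrt 2 : ℂ)⁻¹) • Finsupp.single (T18 true true) 1)
      ((Real.sqrt 2 : ℂ)⁻¹ • Finsupp.single (T19 false) 1 + (-(Real.sqrt 2 : ℂ)⁻¹) • Finsupp.single (T19 true) 1) :=
    stepS2 (by decide) (.app1 (Xc (bit false)) (regBeta (T := Kt (bit true)) (by trivial) (by decide) (by decide))) (.app1 (Xc (bit true)) (regBeta (T := Kt (bit true)) (by trivial) (by decide) (by decide))) (by simp only [hadOut, Finsupp.mapDomain_single, Finsupp.mapDomain_add, Finsupp.mapDomain_smul, mapDomain_sub', smul_smul, ks_mul_ks, smul_add, smul_sub, neg_smul, one_smul, T1, T2, T3, T4, T5, T6, T7, T8, T9, T10, T11, T12, T13, T14, T15, T16, T17, T18, T19, T20, T21, T22, ctx, ctxC, Xh, Xc, Rv, Kt, B1, L1, L2, L2', Hc, Cc, mkPair, pairV, pairE, consT, nilT, caseL, idT, show bit true = Term.const Const.one from rfl, show bit false = Term.const Const.zero from rfl, show xor false false = false from rfl, show xor false true = true from rfl, show xor true false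 = true from rfl, show xor true true = false from rfl] <;> module)
  have H20 : RegStepS ((Real.sqrt 2 : ℂ)⁻¹ • Finsupp.single (T19 false) 1 + (-(Real.sqrt 2 : ℂ)⁻¹) • Finsupp.single (T19 true) 1)
      ((Real.sqrt 2 : ℂ)⁻¹ • Finsupp.single (T20 false) 1 + (-(Real.sqrt 2 : ℂ)⁻¹) • Finsupp.single (T20 true) 1) :=
    stepS2 (by decide) (.app2 (by trivial) (.app1 nilT (regBeta (T := Kt (bit false)) (by trivial) (by decide) (by decide)))) (.app2 (by trivial) (.app1 nilT (regBeta (T := Kt (bit true)) (by trivial) (by decide) (by decide)))) (by simp only [hadOut, Finsupp.mapDomain_single, Finsupp.mapDomain_add, Finsupp.mapDomain_smul, mapDomain_sub', smul_smul, ks_mul_ks, smul_add, smul_sub, neg_smul, one_smul, T1, T2, T3, T4, T5, T6, T7, T8, T9, T10, T11, T12, T13, T14, T15, T16, T17, T18, T19, T20, T21, T22, ctx, ctxC, Xh, Xc, Rv, Kt, B1, L1, L2, L2', Hc, Cc, mkPair, pairV, pairE, consT, nilT, caseL, idT, show bit true = Term.const Const.one from rfl, show bit false = Term.const Const.zero from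 rfl, show xor false false = false from rfl, show xor false true = true from rfl, show xor true false = true from rfl, show xor true true = false from rfl] <;> module)
  have H21 : RegStepS ((Real.sqrt 2 : ℂ)⁻¹ • Finsupp.single (T20 false) 1 + (-(Real.sqrt 2 : ℂ)⁻¹) • Finsupp.single (T20 true) 1)
      ((Real.sqrt 2 : ℂ)⁻¹ • Finsupp.single (T21 false) 1 + (-(Real.sqrt 2 : ℂ)⁻¹) • Finsupp.single (T21 true) 1) :=
    stepS2 (by decide) (.app2 (by trivial) (regBeta (T := Rv (bit false)) (by trivial) (by decide) (by decide))) (.app2 (by trivial) (regBeta (T := Rv (bit true)) (by trivial) (by decide) (by decide))) (by simp only [hadOut, Finsupp.mapDomain_single, Finsupp.mapDomain_add, Finsupp.mapDomain_smul, mapDomain_sub', smul_smul, ks_mul_ks, smul_add, smul_sub, neg_smul, one_smul, T1, T2, T3, T4, T5, T6, T7, T8, T9, T10, T11, T12, T13, T14, T15, T16, T17, T18, T19, T20, T21, T22, ctx, ctxC, Xh, Xc, Rv, Kt, B1, L1, L2, L2', Hc, Cc, mkPair, pairV, pairE, consT, nilT, caseL, idT, show bit true = Term.const Const.one from rfl,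 show bit false = Term.const Const.zero from rfl, show xor false false = false from rfl, show xor false true = true from rfl, show xor true false = true from rfl, show xor true true = false from rfl] <;> module)
  have H22 : RegStepS ((Real.sqrt 2 : ℂ)⁻¹ • Finsupp.single (T21 false) 1 + (-(Real.sqrt 2 : ℂ)⁻¹) • Finsupp.single (T21 true) 1)
      ((Real.sqrt 2 : ℂ)⁻¹ • (Finsupp.single (mkPair (.const .one) (.const .zero)) 1 - Finsupp.single (mkPair (.const .one) (.const .one)) 1)) :=
    stepS2 (by decide) (regBeta (T := T22 false) (by trivial) (by decide) (by decide)) (regBeta (T := T22 true) (by trivial) (by decide) (by decide)) (by simp only [hadOut, Finsupp.mapDomain_single, Finsupp.mapDomain_add, Finsupp.mapDomain_smul, mapDomain_sub', smul_smul, ks_mul_ks, smul_add, smul_sub, neg_smul, one_smul, T1, T2, T3, T4, T5, T6, T7, T8, T9, T10, T11, T12, T13, T14, T15, T16, T17, T18, T19, T20, T21, T22, ctx, ctxC, Xh, Xc, Rv, Kt, B1, L1, L2, L2', Hc, Cc, mkPair, pairV, pairE, consT, nilT, caseL, idT, show bit true = Term.const Const.one from rfl, show bit false = Term.const Const.zero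 from rfl, show xor false false = false from rfl, show xor false true = true from rfl, show xor true false = true from rfl, show xor true true = false from rfl] <;> module)
  exact (Relation.ReflTransGen.head H1 (Relation.ReflTransGen.head H2 (Relation.ReflTransGen.head H3 (Relation.ReflTransGen.head H4 (Relation.ReflTransGen.head H5 (Relation.ReflTransGen.head H6 (Relation.ReflTransGen.head H7 (Relation.ReflTransGen.head H8 (Relation.ReflTransGen.head H9 (Relation.ReflTransGen.head H10 (Relation.ReflTransGen.head H11 (Relation.ReflTransGen.head H12 (Relation.ReflTransGen.head H13 (Relation.ReflTransGen.head H14 (Relation.ReflTransGen.head H15 (Relation.ReflTransGen.head H16 (Relation.ReflTransGen.head H17 (Relation.ReflTransGen.head H18 (Relation.ReflTransGen.head H19 (Relation.ReflTransGen.head H20 (Relation.ReflTransGen.head H21 (Relation.ReflTransGen.head H22 Relation.ReflTransGen.refl))))))))))))))))))))))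

end LambdaQ
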